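/- Every binary prefix normal word not consisting solely of 1s has a prefix normal parent: if w is prefix normal and contains at least one 0, then the word obtained from w by replacing the first occurrence of 0 with a 1 is also prefix normal. -/

import Mathlib

/-- A binary word (list of booleans, `true` = letter 1) is prefix normal if every
factor has at most as many 1s as the prefix of the same length. -/
def prefixNormal (w : List Bool) : Prop :=
  ∀ v : List Bool, v <:+: w → v.count true ≤ (w.take v.length).count true

/-- The word chain of a permutation σ of positions (0-indexed): `pnChain σ 0 = 1^n`
and `pnChain σ (k+1)` flips position `σ k` of `pnChain σ k` from 1 to 0.
(`pnChain σ k` corresponds to the paper's `c_σ[k+1]`.) -/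
def pnChain {n : ℕ} (σ : Equiv.Perm (Fin n)) : ℕ → List Bool
  | 0 => List.replicate n true
  | k + 1 => if h : k < n then (pnChain σ k).set (σ ⟨k, h⟩) false else pnChain σ k

/-- σ is a prefix normal word chain generator iff every word of its chain is prefix normal. -/
def isPNGen {n : ℕ} (σ : Equiv.Perm (Fin n)) : Prop :=
  ∀ k ≤ n, prefixNormal (pnChain σ k)

/-- Replacing the first occurrence of 0 in a prefix normal word by 1
yields a prefix normal word. -/
private lemma count_set_le (l : List Bool) (j : ℕ) :
    (l.set j true).count true ≤ l.count true + 1 := by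
  induction l generalizing j with
  | nil => simp
  | cons a l ih =>
    cases j with
    | zero => cases a <;> simp [List.count_cons]
    | succ j => simp only [List.set_cons_succ, List.count_cons]; have := ih j; omega

private lemma count_take_mono (l : List Bool) {a b : ℕ} (h : a ≤ b) :
    (l.take a).count true ≤ (l.take b).count true := by
  have : (l.take b).take a = l.take a := by
    rw [List.take_take, min_eq_left h]
  rw [← this]
  exact (List.take_sublist _ _).count_le _

private lemma factor_count (w : List Bool) (hpn : prefixNormal w) (p ℓ : ℕ) :
    ((w.drop p).take ℓ).count true ≤ (w.take ℓ).count true := by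
  have hinf : (w.drop p).take ℓ <:+: w :=
    (List.take_prefix _ _).isInfix.trans (List.drop_suffix _ _).isInfix
  calc ((w.drop p).take ℓ).count true
      ≤ (w.take ((w.drop p).take ℓ).length).count true := hpn _ hinf
    _ ≤ (w.take ℓ).count true := count_take_mono _ (by simp)

theorem prefixNormal_parent (w : List Bool) (hpn : prefixNormal w) (h0 : false ∈ w) :
    prefixNormal (w.set (w.idxOf false) true) := by
  set i := w.idxOf false with hidef
  have hi : i < w.length := List.idxOf_lt_length_iff.2 h0
  have hgi : w[i] = false := List.getElem_idxOf hi
  have htake : w.take i = List.replicate i true := by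
    apply List.ext_getElem
    · simp [hi.le]
    · intro k h₁ h₂
      simp only [List.getElem_take, List.getElem_replicate]
      have hk : k < List.findIdx (· == false) w := by
        have : k < i := by rw [List.length_take] at h₁; omega
        exact this
      have := List.not_of_lt_findIdx hk
      simpa using this
  set t := w.drop (i + 1) with htdef
  have hw : w = List.replicate i true ++ false :: t := by
    conv_lhs => rw [← List.take_append_drop i w]
    rw [htake, List.drop_eq_getElem_cons hi, hgi]
  have hw' : w.set i true = List.replicate (i + 1) true ++ t := by
    rw [List.set_eq_take_append_cons_drop, if_pos hi, htake, List.replicate_succ',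
      List.append_assoc, List.singleton_append]
  intro v hv
  obtain ⟨s, u, hsu⟩ := hv
  set ℓ := v.length with hldef
  set p := s.length with hpdef
  have hvw : v = ((w.set i true).drop p).take ℓ := by
    rw [← hsu, List.append_assoc, hpdef, List.drop_left, hldef, List.take_left]
  -- bound on left side
  have hv0 : v.count true ≤ ((w.drop p).take ℓ).count true + 1 := by
    rw [hvw, List.drop_set]
    split
    · exact Nat.le_succ_of_le le_rfl
    · rw [List.take_set]
      exact count_set_le _ _
  rcases le_or_gt ℓ (i + 1) with hle | hlt
  · -- prefix of set word is all ones
    have : (w.set i true).take ℓ = List.replicate ℓ true := by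
      rw [hw', List.take_append, List.take_replicate,
        List.length_replicate, min_eq_left hle, Nat.sub_eq_zero_of_le hle]
      simp
    rw [this]
    simpa using (List.count_le_length (a := true) (l := v) : v.count true ≤ ℓ)
  · -- ℓ > i+1 : count of prefix increases by exactly 1
    obtain ⟨m, hm⟩ : ∃ m, ℓ - i = m + 1 := ⟨ℓ - i - 1, by omega⟩
    have hcw : (w.take ℓ).count true = i + (t.take m).count true := by
      conv_lhs => rw [hw]
      rw [List.take_append, List.take_replicate, List.length_replicate,
        min_eq_right (by omega : i ≤ ℓ), hm]
      simp [List.count_append, List.count_replicate, List.count_cons]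
    have hcw' : ((w.set i true).take ℓ).count true = i + 1 + (t.take m).count true := by
      rw [hw', List.take_append, List.take_replicate, List.length_replicate,
        min_eq_right (by omega : i + 1 ≤ ℓ)]
      have : ℓ - (i + 1) = m := by omega
      rw [this]
      simp [List.count_append, List.count_replicate]
    have hfac := factor_count w hpn p ℓ
    omega
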